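/- Let a : ℝ → ℝ be continuous with a(x) > 0 for all x, and let b : ℝ → ℝ be continuous and satisfy |b(x)| ≤ K(1+|x|) for all x ∈ ℝ, for some constant K > 0. Define I(x) = ∫₀^x (2/a(y)) exp(2 ∫₀^y b(z)/a(z) dz) dy and s′(x) = exp(−2 ∫₀^x b(z)/a(z) dz). Then ∫₁^∞ I(x) s′(x) dx = ∞, i.e. the integral ∫₁^∞ I(x) s′(x) dx diverges. -/

import Mathlib

open MeasureTheory Filter Set Topology

noncomputable def Fab (a b : ℝ → ℝ) (x : ℝ) : ℝ := ∫ z in (0:ℝ)..x, b z / a z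
noncomputable def gab (a b : ℝ → ℝ) (y : ℝ) : ℝ := (2 / a y) * Real.exp (2 * Fab a b y)
noncomputable def fab (a b : ℝ → ℝ) (x : ℝ) : ℝ :=
  (∫ y in (0:ℝ)..x, gab a b y) * Real.exp (-2 * Fab a b x)

theorem stmt4_aux (a b : ℝ → ℝ) (K : ℝ) (hK : 0 < K)
    (ha_cont : Continuous a) (ha_pos : ∀ x : ℝ, 0 < a x)
    (hb_cont : Continuous b) (hb : ∀ x : ℝ, |b x| ≤ K * (1 + |x|)) :
    ∫⁻ x in Set.Ioi (1:ℝ), ENNReal.ofReal (fab a b x) = ⊤ := by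
  have haz : ∀ x, a x ≠ 0 := fun x => (ha_pos x).ne'
  have hq_cont : Continuous (fun z => b z / a z) := hb_cont.div ha_cont haz
  have hF : ∀ x, HasDerivAt (Fab a b) (b x / a x) x := fun x =>
    intervalIntegral.integral_hasDerivAt_right (hq_cont.intervalIntegrable _ _)
      (hq_cont.stronglyMeasurableAtFilter _ _) hq_cont.continuousAt
  have hF_cont : Continuous (Fab a b) :=
    Differentiable.continuous (fun x => (hF x).differentiableAt)
  have hg_cont : Continuous (gab a b) :=
    (continuous_const.div ha_cont haz).mul ((continuous_const.mul hF_cont).rexp)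
  have hg_pos : ∀ y, 0 < gab a b y := fun y =>
    mul_pos (div_pos two_pos (ha_pos y)) (Real.exp_pos _)
  have hH : ∀ x, HasDerivAt (fun u => ∫ y in (0:ℝ)..u, gab a b y) (gab a b x) x := fun x =>
    intervalIntegral.integral_hasDerivAt_right (hg_cont.intervalIntegrable _ _)
      (hg_cont.stronglyMeasurableAtFilter _ _) hg_cont.continuousAt
  have hf_deriv : ∀ x, HasDerivAt (fab a b) ((2 / a x) * (1 - b x * fab a b x)) x := by
    intro x
    have hE : HasDerivAt (fun u => Real.exp (-2 * Fab a b u))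
        (Real.exp (-2 * Fab a b x) * (-2 * (b x / a x))) x := ((hF x).const_mul (-2)).exp
    have := (hH x).mul hE
    refine this.congr_deriv (Eq.symm ?_)
    have h1 : Real.exp (2 * Fab a b x) * Real.exp (-2 * Fab a b x) = 1 := by
      rw [← Real.exp_add, show 2 * Fab a b x + -2 * Fab a b x = 0 by ring, Real.exp_zero]
    have hgx : gab a b x = 2 / a x * Real.exp (2 * Fab a b x) := rfl
    have hfx : fab a b x = (∫ y in (0:ℝ)..x, gab a b y) * Real.exp (-2 * Fab a b x) := rfl
    rw [hgx, hfx]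
    linear_combination (-(2 / a x)) * h1
  have hf_cont : Continuous (fab a b) :=
    Differentiable.continuous (fun x => (hf_deriv x).differentiableAt)
  have hf_pos : ∀ x : ℝ, 0 < x → 0 < fab a b x := by
    intro x hx
    exact mul_pos (intervalIntegral.intervalIntegral_pos_of_pos
      (hg_cont.intervalIntegrable _ _) hg_pos hx) (Real.exp_pos _)
  set c : ℝ := fab a b 1 with hc_def
  have hc : 0 < c := hf_pos 1 one_pos
  -- Key claim
  have claim : ∀ x : ℝ, 1 ≤ x → min c (1 / (2 * K * (1 + x))) ≤ fab a b x := by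
    intro x hx
    by_contra hcon
    push_neg at hcon
    have hfx1 : fab a b x < c := lt_of_lt_of_le hcon (min_le_left _ _)
    have hfx2 : fab a b x < 1 / (2 * K * (1 + x)) := lt_of_lt_of_le hcon (min_le_right _ _)
    have hx1 : 1 < x := by
      rcases lt_or_eq_of_le hx with h | h
      · exact h
      · exfalso; rw [← h] at hfx1; exact lt_irrefl _ hfx1
    set S : Set ℝ := {t | t ∈ Icc 1 x ∧ fab a b t ≤ fab a b x} with hS_def
    have hSne : S.Nonempty := ⟨x, ⟨hx, le_refl x⟩, le_refl _⟩
    have hSbdd : BddBelow S := ⟨1, fun t ht => ht.1.1⟩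
    have hSclosed : IsClosed S := by
      have : S = Icc 1 x ∩ (fab a b) ⁻¹' (Iic (fab a b x)) := rfl
      rw [this]
      exact isClosed_Icc.inter (isClosed_Iic.preimage hf_cont)
    set t₀ : ℝ := sInf S with ht₀_def
    have ht₀S : t₀ ∈ S := hSclosed.csInf_mem hSne hSbdd
    obtain ⟨⟨ht₀1, ht₀x⟩, ht₀f⟩ := ht₀S
    have ht₀1' : 1 < t₀ := by
      rcases lt_or_eq_of_le ht₀1 with h | h
      · exact h
      · exfalso; rw [← h] at ht₀f; exact absurd (lt_of_le_of_lt ht₀f hfx1) (lt_irrefl _)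
    -- derivative at t₀ is positive
    have hft₀pos : 0 < fab a b t₀ := hf_pos t₀ (lt_trans one_pos ht₀1')
    have hbound : fab a b t₀ < 1 / (2 * K * (1 + t₀)) := by
      have h2 : (0:ℝ) < 2 * K * (1 + t₀) := by positivity
      have h3 : 2 * K * (1 + t₀) ≤ 2 * K * (1 + x) := by nlinarith
      calc fab a b t₀ ≤ fab a b x := ht₀f
        _ < 1 / (2 * K * (1 + x)) := hfx2
        _ ≤ 1 / (2 * K * (1 + t₀)) := by
            apply one_div_le_one_div_of_le h2 h3
    have hbf : b t₀ * fab a b t₀ < 1 / 2 := by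
      have h1 : b t₀ * fab a b t₀ ≤ |b t₀| * fab a b t₀ :=
        mul_le_mul_of_nonneg_right (le_abs_self _) hft₀pos.le
      have h2 : |b t₀| ≤ K * (1 + t₀) := by
        have := hb t₀
        rwa [abs_of_pos (lt_trans one_pos ht₀1')] at this
      have h3 : |b t₀| * fab a b t₀ ≤ K * (1 + t₀) * fab a b t₀ :=
        mul_le_mul_of_nonneg_right h2 hft₀pos.le
      have h4 : K * (1 + t₀) * fab a b t₀ < K * (1 + t₀) * (1 / (2 * K * (1 + t₀))) := by
        apply mul_lt_mul_of_pos_left hbound (by positivity)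
      have h5 : K * (1 + t₀) * (1 / (2 * K * (1 + t₀))) = 1 / 2 := by
        field_simp
      linarith
    have hDpos : 0 < (2 / a t₀) * (1 - b t₀ * fab a b t₀) := by
      apply mul_pos (div_pos two_pos (ha_pos t₀))
      linarith
    -- use the slope to find a smaller point
    have hslope := hasDerivAt_iff_tendsto_slope.mp (hf_deriv t₀)
    have hev1 : ∀ᶠ t in 𝓝[<] t₀, 0 < slope (fab a b) t₀ t := by
      apply (hslope.mono_left (nhdsWithin_mono _ (fun y hy => ne_of_lt hy))).eventually
      exact eventually_gt_nhds hDpos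
    have hev2 : ∀ᶠ t in 𝓝[<] t₀, t ∈ Ioo 1 t₀ :=
      Ioo_mem_nhdsLT_of_mem ⟨ht₀1', le_refl _⟩
    obtain ⟨t, hts, htI⟩ := (hev1.and hev2).exists
    have htlt : fab a b t < fab a b t₀ := by
      have hd : t - t₀ < 0 := by linarith [htI.2]
      rw [slope_def_field] at hts
      by_contra hge
      push_neg at hge
      have : (fab a b t - fab a b t₀) / (t - t₀) ≤ 0 :=
        div_nonpos_of_nonneg_of_nonpos (by linarith) hd.le
      linarith
    have htS : t ∈ S := ⟨⟨htI.1.le, le_trans htI.2.le ht₀x⟩, le_trans htlt.le ht₀f⟩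
    have := csInf_le hSbdd htS
    linarith [htI.2]
  -- Final part
  clear hf_deriv hH hF hF_cont hq_cont
  set x₀ : ℝ := max 1 (1 / (2 * K * c)) with hx₀_def
  have hx₀1 : (1:ℝ) ≤ x₀ := le_max_left _ _
  have hx₀c : 1 / (2 * K * c) ≤ x₀ := le_max_right _ _
  have hmin : ∀ x : ℝ, x ∈ Ioi x₀ → 1 / (2 * K * (1 + x)) ≤ fab a b x := by
    intro x hx
    rw [mem_Ioi] at hx
    have hx1 : (1:ℝ) ≤ x := le_of_lt (lt_of_le_of_lt hx₀1 hx)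
    have hφc : 1 / (2 * K * (1 + x)) ≤ c := by
      rw [div_le_iff₀ (by positivity)]
      have h1 : 1 / (2 * K * c) ≤ x := le_of_lt (lt_of_le_of_lt hx₀c hx)
      rw [div_le_iff₀ (by positivity)] at h1
      nlinarith
    have := claim x hx1
    rwa [min_eq_right hφc] at this
  have hφtop : ∫⁻ x in Ioi x₀, ENNReal.ofReal (1 / (2 * K * (1 + x))) = ⊤ := by
    by_contra hfin
    have hx₀pos : (0:ℝ) < x₀ := lt_of_lt_of_le one_pos hx₀1
    have hmeas : AEStronglyMeasurable (fun x : ℝ => 1 / (2 * K * (1 + x)))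
        (volume.restrict (Ioi x₀)) :=
      (measurable_const.div ((measurable_const.add measurable_id).const_mul _)).aestronglyMeasurable
    have hnn : 0 ≤ᵐ[volume.restrict (Ioi x₀)] fun x : ℝ => 1 / (2 * K * (1 + x)) := by
      filter_upwards [ae_restrict_mem measurableSet_Ioi] with x hx
      have : (0:ℝ) < x := lt_trans hx₀pos hx
      positivity
    have hint : IntegrableOn (fun x : ℝ => 1 / (2 * K * (1 + x))) (Ioi x₀) :=
      ⟨hmeas, (hasFiniteIntegral_iff_ofReal hnn).2 (lt_top_iff_ne_top.2 hfin)⟩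
    have hint2 : IntegrableOn (fun x : ℝ => x ^ (-1:ℝ)) (Ioi x₀) := by
      apply Integrable.mono' (hint.const_mul (4 * K))
      · exact ((measurable_id.pow_const _).aestronglyMeasurable :
          AEStronglyMeasurable (fun x : ℝ => x ^ (-1:ℝ)) (volume.restrict (Ioi x₀)))
      · filter_upwards [ae_restrict_mem measurableSet_Ioi] with x hx
        rw [mem_Ioi] at hx
        have hx1 : (1:ℝ) ≤ x := le_of_lt (lt_of_le_of_lt hx₀1 hx)
        have hxpos : (0:ℝ) < x := lt_of_lt_of_le one_pos hx1
        rw [Real.rpow_neg_one, Real.norm_eq_abs, abs_of_pos (inv_pos.2 hxpos)]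
        have he : 4 * K * (1 / (2 * K * (1 + x))) = 2 / (1 + x) := by
          field_simp
          ring
        rw [he, inv_eq_one_div, div_le_div_iff₀ hxpos (by positivity)]
        linarith
    rw [integrableOn_Ioi_rpow_iff hx₀pos] at hint2
    linarith
  rw [eq_top_iff]
  calc (⊤:ENNReal) = ∫⁻ x in Ioi x₀, ENNReal.ofReal (1 / (2 * K * (1 + x))) := hφtop.symm
    _ ≤ ∫⁻ x in Ioi x₀, ENNReal.ofReal (fab a b x) := by
        apply setLIntegral_mono (by
          exact (ENNReal.measurable_ofReal.comp hf_cont.measurable))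
        intro x hx
        exact ENNReal.ofReal_le_ofReal (hmin x hx)
    _ ≤ ∫⁻ x in Ioi 1, ENNReal.ofReal (fab a b x) :=
        lintegral_mono_set (Ioi_subset_Ioi hx₀1)

/-- Feller's criterion for inaccessibility of `+∞` under linear growth of
the drift: with `I(x) = ∫₀^x (2/a(y)) exp(2∫₀^y b/a) dy` and `s'(x) = exp(-2∫₀^x b/a)`,
the integral `∫₁^∞ I(x) s'(x) dx` diverges. -/
theorem stmt4 (a b : ℝ → ℝ) (K : ℝ) (hK : 0 < K)
    (ha_cont : Continuous a) (ha_pos : ∀ x : ℝ, 0 < a x)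
    (hb_cont : Continuous b) (hb : ∀ x : ℝ, |b x| ≤ K * (1 + |x|)) :
    ∫⁻ x in Set.Ioi (1:ℝ),
      ENNReal.ofReal
        ((∫ y in (0:ℝ)..x, (2 / a y) * Real.exp (2 * ∫ z in (0:ℝ)..y, b z / a z)) *
          Real.exp (-2 * ∫ z in (0:ℝ)..x, b z / a z)) = ⊤ := by
  have := stmt4_aux a b K hK ha_cont ha_pos hb_cont hb
  simpa only [fab, gab, Fab] using this
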